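/- arXiv:2507.08101 — 2 statements merged into one kernel-verified Lean document; each statement's English description precedes it below -/
import Mathlib

section
/- Assume limsup_{t → ∞} B(t) / { K · exp[(μ − σ²/2)t + σ·√(2t·ln(ln t))] } > 1. Then τ < ∞ almost surely, i.e. ℙ(τ < ∞) = 1. -/
open MeasureTheory ProbabilityTheory Filter Set
open scoped ENNReal NNReal Topology

noncomputable section

/-- A standard one-dimensional Brownian motion on a probability space `(Ω, P)`:
measurable coordinates, starts at `0`, almost surely continuous paths, Gaussian
increments `W t - W s ~ N(0, t - s)`, and independent increments. -/
structure IsStandardBrownianMotion {Ω : Type*} [MeasurableSpace Ω]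
    (P : Measure Ω) (W : ℝ → Ω → ℝ) : Prop where
  meas : ∀ t : ℝ, Measurable (W t)
  init : ∀ᵐ ω ∂P, W 0 ω = 0
  cont : ∀ᵐ ω ∂P, Continuous fun t => W t ω
  gauss_incr : ∀ s t : ℝ, 0 ≤ s → s ≤ t →
    P.map (fun ω => W t ω - W s ω) = gaussianReal 0 (Real.toNNReal (t - s))
  indep_incr : ∀ (n : ℕ) (t : Fin (n + 1) → ℝ), Monotone t → (∀ i, 0 ≤ t i) →
    iIndepFun
      (fun i : Fin n => fun ω => W (t i.succ) ω - W (t i.castSucc) ω) P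

/-- The geometric Brownian motion `V_t = V₀ exp((μ - σ²/2) t + σ W_t)`. -/
def gbm {Ω : Type*} (V₀ μ σ : ℝ) (W : ℝ → Ω → ℝ) (t : ℝ) (ω : Ω) : ℝ :=
  V₀ * Real.exp ((μ - σ ^ 2 / 2) * t + σ * W t ω)

/-- First passage time of the process `V` through the barrier `B`, with values in
`[0, ∞]` and the convention `inf ∅ = ∞`. -/
def fpt {Ω : Type*} (V : ℝ → Ω → ℝ) (B : ℝ → ℝ) (ω : Ω) : ℝ≥0∞ :=
  sInf {x : ℝ≥0∞ | ∃ t : ℝ, 0 ≤ t ∧ V t ω = B t ∧ x = ENNReal.ofReal t}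

/-- Tail of the standard Gaussian measure tends to `0`. -/
lemma gauss_tail_tendsto :
    Tendsto (fun y : ℝ => gaussianReal 0 1 (Ioi y)) atTop (𝓝 0) := by
  have h2 : ∀ y : ℝ, gaussianReal 0 1 (Ioi y) = 1 - gaussianReal 0 1 (Iic y) := by
    intro y
    rw [← compl_Iic, measure_compl measurableSet_Iic (measure_ne_top _ _), measure_univ]
  simp_rw [h2]
  have h := tendsto_measure_Iic_atTop (gaussianReal 0 1)
  rw [measure_univ] at h
  simpa using ENNReal.Tendsto.sub tendsto_const_nhds h (Or.inl ENNReal.one_ne_top)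

lemma sqrt_tendsto_atTop : Tendsto Real.sqrt atTop atTop := by
  apply tendsto_atTop_atTop_of_monotone (fun a b h => Real.sqrt_le_sqrt h)
  intro b
  refine ⟨(max b 0) ^ 2, ?_⟩
  rw [Real.sqrt_sq (le_max_right _ _)]
  exact le_max_left _ _

/-- Scaling of the Gaussian measure of a right tail. -/
lemma gauss_scaling {t : ℝ} (ht : 0 < t) (x : ℝ) :
    gaussianReal 0 t.toNNReal (Ioi x) = gaussianReal 0 1 (Ioi (x / Real.sqrt t)) := by
  have hst : 0 < Real.sqrt t := Real.sqrt_pos.mpr ht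
  have h := gaussianReal_map_const_mul (μ := 0) (v := 1) (Real.sqrt t)
  rw [mul_one, mul_zero] at h
  have hv : NNReal.mk ((Real.sqrt t) ^ 2) (sq_nonneg _) = t.toNNReal := by
    apply Subtype.ext
    simp [Real.sq_sqrt ht.le, Real.coe_toNNReal _ ht.le]
  rw [hv] at h
  rw [← h, Measure.map_apply (measurable_const_mul _) measurableSet_Ioi]
  congr 1
  ext y
  simp only [mem_preimage, mem_Ioi]
  rw [div_lt_iff₀ hst, mul_comm]

/-- If `limsup B(t) / (K exp[(μ - σ²/2)t + σ √(2t ln ln t)]) > 1`, then `τ < ∞` a.s. -/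
theorem fpt_ae_finite_of_limsup_upper_loglog
    {Ω : Type*} [MeasurableSpace Ω] (P : Measure Ω) [IsProbabilityMeasure P]
    (W : ℝ → Ω → ℝ) (hW : IsStandardBrownianMotion P W)
    (μ σ V₀ : ℝ) (hσ : 0 < σ) (hV₀ : 0 < V₀)
    (B : ℝ → ℝ) (hBcont : ContinuousOn B (Ici 0)) (hBpos : ∀ t ≥ (0 : ℝ), 0 < B t)
    (hK : B 0 < V₀)
    (hlim : 1 < limsup (fun t : ℝ =>
      ((B t / (B 0 * Real.exp ((μ - σ ^ 2 / 2) * t + σ * Real.sqrt (2 * t * Real.log (Real.log t)))) : ℝ) : EReal)) atTop) :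
    P {ω | fpt (gbm V₀ μ σ W) B ω < ⊤} = 1 := by
  have hKpos : 0 < B 0 := hBpos 0 le_rfl
  -- extract a real constant `c > 1` below the limsup
  obtain ⟨z, h1z, hz⟩ := exists_between hlim
  have hzt : z ≠ ⊤ := (hz.trans_le le_top).ne
  have hzb : z ≠ ⊥ := ne_bot_of_gt h1z
  set c := z.toReal with hcdef
  have hzc : (c : EReal) = z := EReal.coe_toReal hzt hzb
  have h1c : (1 : ℝ) < c := by
    have h := h1z
    rw [← hzc] at h
    exact_mod_cast h
  have hcpos : 0 < c := lt_trans one_pos h1c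
  have hfreq : ∃ᶠ t in atTop,
      c * (B 0 * Real.exp ((μ - σ ^ 2 / 2) * t +
        σ * Real.sqrt (2 * t * Real.log (Real.log t)))) < B t := by
    have h := frequently_lt_of_lt_limsup (u := fun t : ℝ =>
      ((B t / (B 0 * Real.exp ((μ - σ ^ 2 / 2) * t + σ * Real.sqrt (2 * t * Real.log (Real.log t)))) : ℝ) : EReal))
      isCobounded_le_of_bot hz
    refine h.mono fun t ht => ?_
    rw [← hzc] at ht
    have hD : 0 < B 0 * Real.exp ((μ - σ ^ 2 / 2) * t +
        σ * Real.sqrt (2 * t * Real.log (Real.log t))) :=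
      mul_pos hKpos (Real.exp_pos _)
    have ht' : c < B t / (B 0 * Real.exp ((μ - σ ^ 2 / 2) * t +
        σ * Real.sqrt (2 * t * Real.log (Real.log t)))) := EReal.coe_lt_coe_iff.mp ht
    exact (lt_div_iff₀ hD).mp ht'
  set a : ℝ := (Real.log c + Real.log (B 0) - Real.log V₀) / σ with hadef
  set NC : Set Ω := {ω | W 0 ω = 0 ∧ Continuous (fun t => W t ω) ∧
      ∀ t ≥ (0:ℝ), gbm V₀ μ σ W t ω ≠ B t} with hNCdef
  -- Step A : P NC = 0
  have hNC0 : P NC = 0 := by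
    refine le_antisymm ?_ (zero_le)
    refine ENNReal.le_of_forall_pos_le_add fun ε hε _ => ?_
    rw [zero_add]
    -- choose Y with small tail beyond Y
    have htail : ∀ᶠ y in atTop, gaussianReal 0 1 (Ioi y) < (ε : ℝ≥0∞) :=
      gauss_tail_tendsto.eventually_lt_const (ENNReal.coe_pos.mpr hε)
    obtain ⟨Y, hY⟩ := eventually_atTop.mp htail
    -- eventual conditions on t
    have hLL : Tendsto (fun t : ℝ => Real.log (Real.log t)) atTop atTop :=
      Real.tendsto_log_atTop.comp Real.tendsto_log_atTop
    have h2L : Tendsto (fun t : ℝ => Real.sqrt (2 * Real.log (Real.log t))) atTop atTop :=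
      sqrt_tendsto_atTop.comp (hLL.const_mul_atTop two_pos)
    have hadiv : Tendsto (fun t : ℝ => a / Real.sqrt t) atTop (𝓝 0) :=
      Tendsto.div_atTop tendsto_const_nhds sqrt_tendsto_atTop
    have hball : ∀ᶠ t : ℝ in atTop, (0 < t ∧ 0 ≤ Real.log (Real.log t)) ∧
        Y + 1 ≤ Real.sqrt (2 * Real.log (Real.log t)) ∧ -1 ≤ a / Real.sqrt t := by
      filter_upwards [eventually_gt_atTop (0:ℝ), hLL.eventually_ge_atTop 0,
        h2L.eventually_ge_atTop (Y + 1),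
        hadiv.eventually (eventually_ge_nhds (by norm_num : (-1:ℝ) < 0))] with t h1 h2 h3 h4
      exact ⟨⟨h1, h2⟩, h3, h4⟩
    obtain ⟨t, hct, ⟨ht0, hL0⟩, hsq, hdiv⟩ := (hfreq.and_eventually hball).exists
    set S : ℝ := Real.sqrt (2 * t * Real.log (Real.log t)) with hSdef
    set x : ℝ := S + a with hxdef
    -- NC ⊆ {ω | x < W t ω}
    have hsub : NC ⊆ {ω | x < W t ω} := by
      rintro ω ⟨h0, hcont, hne⟩
      have hVcont : Continuous (fun s => gbm V₀ μ σ W s ω) := by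
        unfold gbm
        exact continuous_const.mul (Real.continuous_exp.comp
          ((continuous_const.mul continuous_id).add (continuous_const.mul hcont)))
      have hgt : ∀ s ≥ (0:ℝ), B s < gbm V₀ μ σ W s ω := by
        intro s hs
        by_contra hle
        push_neg at hle
        have hF : ContinuousOn (fun u => gbm V₀ μ σ W u ω - B u) (Icc 0 s) :=
          (hVcont.continuousOn).sub (hBcont.mono Icc_subset_Ici_self)
        have hF0 : 0 < gbm V₀ μ σ W 0 ω - B 0 := by
          have : gbm V₀ μ σ W 0 ω = V₀ := by simp [gbm, h0]
          rw [this]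
          linarith
        have hmem : (0:ℝ) ∈ Icc (gbm V₀ μ σ W s ω - B s) (gbm V₀ μ σ W 0 ω - B 0) :=
          ⟨by linarith, hF0.le⟩
        obtain ⟨u, hu, huF⟩ := intermediate_value_Icc' hs hF hmem
        exact hne u hu.1 (sub_eq_zero.mp huF)
      have hVt := hgt t ht0.le
      have hchain : c * (B 0 * Real.exp ((μ - σ ^ 2 / 2) * t + σ * S)) <
          V₀ * Real.exp ((μ - σ ^ 2 / 2) * t + σ * W t ω) := lt_trans hct hVt
      have hlhs : 0 < c * (B 0 * Real.exp ((μ - σ ^ 2 / 2) * t + σ * S)) :=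
        mul_pos hcpos (mul_pos hKpos (Real.exp_pos _))
      have hlog := Real.log_lt_log hlhs hchain
      rw [Real.log_mul hcpos.ne' (mul_pos hKpos (Real.exp_pos _)).ne',
        Real.log_mul hKpos.ne' (Real.exp_pos _).ne', Real.log_exp,
        Real.log_mul hV₀.ne' (Real.exp_pos _).ne', Real.log_exp] at hlog
      have hsa : σ * a = Real.log c + Real.log (B 0) - Real.log V₀ := by
        rw [hadef, mul_div_cancel₀ _ hσ.ne']
      have hmul : σ * (S + a) < σ * W t ω := by nlinarith [hsa]
      exact (mul_lt_mul_iff_right₀ hσ).mp hmul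
    -- distribution of W t
    have hsets : ({ω | x < W t ω} : Set Ω) =ᵐ[P] {ω | x < W t ω - W 0 ω} :=
      Filter.eventuallyEq_set.mpr (by filter_upwards [hW.init] with ω h0; simp [h0])
    have hdist : P {ω | x < W t ω} = gaussianReal 0 t.toNNReal (Ioi x) := by
      rw [measure_congr hsets]
      have hmap := hW.gauss_incr 0 t le_rfl ht0.le
      rw [sub_zero] at hmap
      rw [← hmap, Measure.map_apply (f := fun ω => W t ω - W 0 ω) ((hW.meas t).sub (hW.meas 0)) measurableSet_Ioi]
      rfl
    -- threshold bound
    have hxdiv : x / Real.sqrt t = Real.sqrt (2 * Real.log (Real.log t)) + a / Real.sqrt t := by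
      have h1 : S = Real.sqrt t * Real.sqrt (2 * Real.log (Real.log t)) := by
        rw [hSdef, show 2 * t * Real.log (Real.log t) = t * (2 * Real.log (Real.log t)) by ring,
          Real.sqrt_mul ht0.le]
      rw [hxdef, add_div, h1, mul_div_cancel_left₀ _ (Real.sqrt_pos.mpr ht0).ne']
    have hYx : Y ≤ x / Real.sqrt t := by
      rw [hxdiv]; linarith
    calc P NC ≤ P {ω | x < W t ω} := measure_mono hsub
      _ = gaussianReal 0 t.toNNReal (Ioi x) := hdist
      _ = gaussianReal 0 1 (Ioi (x / Real.sqrt t)) := gauss_scaling ht0 x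
      _ ≤ ε := (hY _ hYx).le
  -- Step B : almost surely the passage time is finite
  have hmain : ∀ᵐ ω ∂P, fpt (gbm V₀ μ σ W) B ω < ⊤ := by
    have hnc : ∀ᵐ ω ∂P, ω ∉ NC := measure_eq_zero_iff_ae_notMem.mp hNC0
    filter_upwards [hW.init, hW.cont, hnc] with ω h0 hcont hnot
    have hex : ∃ t ≥ (0:ℝ), gbm V₀ μ σ W t ω = B t := by
      by_contra hcon
      push_neg at hcon
      exact hnot ⟨h0, hcont, fun t ht => hcon t ht⟩
    obtain ⟨t, ht, heq⟩ := hex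
    exact lt_of_le_of_lt (sInf_le ⟨t, ht, heq, rfl⟩) ENNReal.ofReal_lt_top
  -- conclusion
  set s : Set Ω := {ω | fpt (gbm V₀ μ σ W) B ω < ⊤} with hsdef
  have hcompl : P sᶜ = 0 := by
    have : P {ω | ¬ fpt (gbm V₀ μ σ W) B ω < ⊤} = 0 := ae_iff.mp hmain
    simpa [hsdef, compl_setOf] using this
  refine le_antisymm prob_le_one ?_
  calc (1:ℝ≥0∞) = P univ := measure_univ.symm
    _ = P (s ∪ sᶜ) := by rw [union_compl_self]
    _ ≤ P s + P sᶜ := measure_union_le s sᶜ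
    _ = P s := by rw [hcompl, add_zero]
end
end

section
/- Let the barrier be B(t) = K·exp[(μ − σ²/2)t + B̃(t)], where B̃ : [0,∞) → [0,∞) is continuous, concave, strictly increasing, with B̃(0) = 0 and B̃(t) → ∞ as t → ∞ (so that B̃ is a bijection of [0,∞) onto itself, with continuous strictly increasing inverse B̃⁻¹). Then the first passage time τ of V_t through B satisfies E[τ] ≥ B̃⁻¹(q) > 0, where q := ln(V₀/K). -/
open MeasureTheory ProbabilityTheory Filter Set
open scoped ENNReal NNReal Classical
open Topology

noncomputable section

namespace FPTAux


lemma gauss_pdf_mul (c : ℝ) (v : ℝ≥0) (hv : v ≠ 0) (x : ℝ) :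
    gaussianPDFReal 0 v x * Real.exp (c*x)
      = Real.exp (c^2*v/2) * gaussianPDFReal (c*v) v x := by
  have hv0 : (0:ℝ) < v := lt_of_le_of_ne v.2 (by exact_mod_cast (Ne.symm hv))
  have hexp : -(x - 0)^2/(2*(v:ℝ)) + c*x = c^2*v/2 + (-(x - c*v)^2/(2*(v:ℝ))) := by
    field_simp
    ring
  rw [gaussianPDFReal, gaussianPDFReal, mul_assoc, ← Real.exp_add, hexp, Real.exp_add]
  ring

lemma lintegral_exp_gauss (c : ℝ) (v : ℝ≥0) :
    ∫⁻ x, ENNReal.ofReal (Real.exp (c * x)) ∂(gaussianReal 0 v)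
      = ENNReal.ofReal (Real.exp (c^2 * v / 2)) := by
  rcases eq_or_ne v 0 with h | h
  · subst h
    rw [gaussianReal_zero_var, lintegral_dirac]
    norm_num
  · rw [gaussianReal_of_var_ne_zero _ h,
      lintegral_withDensity_eq_lintegral_mul _ (measurable_gaussianPDF _ _)
        (by fun_prop)]
    have hpt : ∀ x : ℝ, gaussianPDF 0 v x * ENNReal.ofReal (Real.exp (c*x))
        = ENNReal.ofReal (Real.exp (c^2*v/2)) * gaussianPDF (c*v) v x := by
      intro x
      rw [gaussianPDF_def, gaussianPDF_def, ← ENNReal.ofReal_mul (gaussianPDFReal_nonneg 0 v x),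
        ← ENNReal.ofReal_mul (Real.exp_nonneg _), gauss_pdf_mul c v h x]
    calc ∫⁻ x, (gaussianPDF 0 v * fun x => ENNReal.ofReal (Real.exp (c*x))) x
        = ∫⁻ x, ENNReal.ofReal (Real.exp (c^2*v/2)) * gaussianPDF (c*v) v x := by
          refine lintegral_congr fun x => ?_
          simpa using hpt x
      _ = ENNReal.ofReal (Real.exp (c^2*v/2)) * ∫⁻ x, gaussianPDF (c*v) v x :=
          lintegral_const_mul _ (measurable_gaussianPDF _ _)
      _ = ENNReal.ofReal (Real.exp (c^2*v/2)) := by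
          rw [lintegral_gaussianPDF_eq_one _ h, mul_one]

lemma exp_jensen {Ω : Type*} [MeasurableSpace Ω] (P : Measure Ω) [IsProbabilityMeasure P]
    {Y : Ω → ℝ} (hY : Integrable Y P) (hE : Integrable (fun ω => Real.exp (-Y ω)) P) :
    Real.exp (-∫ ω, Y ω ∂P) ≤ ∫ ω, Real.exp (-Y ω) ∂P := by
  set c := ∫ ω, Y ω ∂P with hc
  have h1 : ∀ ω, Real.exp (-c) * ((c - Y ω) + 1) ≤ Real.exp (-Y ω) := by
    intro ω
    calc Real.exp (-c) * ((c - Y ω) + 1) ≤ Real.exp (-c) * Real.exp (c - Y ω) :=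
          mul_le_mul_of_nonneg_left (Real.add_one_le_exp _) (Real.exp_nonneg _)
      _ = Real.exp (-Y ω) := by rw [← Real.exp_add]; ring_nf
  have hint : Integrable (fun ω => Real.exp (-c) * ((c - Y ω) + 1)) P :=
    ((((integrable_const c).sub hY).add (integrable_const 1)).const_mul _)
  have h2 := integral_mono hint hE h1
  have h3 : ∫ ω, Real.exp (-c) * ((c - Y ω) + 1) ∂P = Real.exp (-c) := by
    simp_rw [← smul_eq_mul]
    rw [integral_smul]
    have : ∫ (a : Ω), c - Y a + 1 ∂P = 1 := by
      have e1 : (fun a : Ω => c - Y a + 1) = fun a : Ω => (c+1) - Y a := by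
        funext a; ring
      rw [e1, integral_sub (integrable_const (c+1)) hY, integral_const]
      simp [← hc]
    rw [this]
    simp
  rw [← h3]; exact h2


set_option linter.unusedSectionVars false

variable {Ω : Type*} [MeasurableSpace Ω]

/-- increment of the path from time `0`. -/
def gX (W : ℝ → Ω → ℝ) (δ : ℝ) (j : ℕ) (ω : Ω) : ℝ := W ((j : ℝ) * δ) ω - W 0 ω

/-- first index `j ≤ N` on the grid where `cond j` holds for the path value, else `N`. -/
def gK (W : ℝ → Ω → ℝ) (δ : ℝ) (N : ℕ) (cond : ℕ → ℝ → Prop) (ω : Ω) : ℕ :=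
  Nat.find (p := fun j => (j ≤ N ∧ cond j (gX W δ j ω)) ∨ j = N) ⟨N, Or.inr rfl⟩

/-- the exponential supermartingale along the grid. -/
def gZ (lam : ℝ) (W : ℝ → Ω → ℝ) (δ : ℝ) (j : ℕ) (ω : Ω) : ℝ≥0∞ :=
  ENNReal.ofReal (Real.exp (-lam * gX W δ j ω - lam^2 * ((j : ℝ) * δ) / 2))

lemma gX_meas (W : ℝ → Ω → ℝ) (hm : ∀ t, Measurable (W t)) (δ : ℝ) (j : ℕ) :
    Measurable (gX W δ j) := (hm _).sub (hm 0)

lemma gK_le (W : ℝ → Ω → ℝ) (δ : ℝ) (N : ℕ) (cond : ℕ → ℝ → Prop) (ω : Ω) :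
    gK W δ N cond ω ≤ N := Nat.find_le (Or.inr rfl)

lemma gK_spec (W : ℝ → Ω → ℝ) (δ : ℝ) (N : ℕ) (cond : ℕ → ℝ → Prop) (ω : Ω) :
    cond (gK W δ N cond ω) (gX W δ (gK W δ N cond ω) ω) ∨ gK W δ N cond ω = N := by
  have h := Nat.find_spec (p := fun j => (j ≤ N ∧ cond j (gX W δ j ω)) ∨ j = N)
    ⟨N, Or.inr rfl⟩
  rcases h with h | h
  · exact Or.inl h.2
  · exact Or.inr h

lemma gK_lt_iff (W : ℝ → Ω → ℝ) (δ : ℝ) (N : ℕ) (cond : ℕ → ℝ → Prop) (ω : Ω)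
    (k : ℕ) (hk : k < N) :
    k < gK W δ N cond ω ↔ ∀ j ≤ k, ¬ cond j (gX W δ j ω) := by
  rw [gK, Nat.lt_find_iff]
  constructor
  · intro h j hj hcj
    exact h j hj (Or.inl ⟨le_of_lt (lt_of_le_of_lt hj hk), hcj⟩)
  · intro h j hj
    rintro (⟨-, hcj⟩ | rfl)
    · exact h j hj hcj
    · omega

lemma gK_find_le (W : ℝ → Ω → ℝ) (δ : ℝ) (N : ℕ) (cond : ℕ → ℝ → Prop) (ω : Ω)
    (j : ℕ) (hj : j ≤ N) (hcj : cond j (gX W δ j ω)) :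
    gK W δ N cond ω ≤ j := Nat.find_le (Or.inl ⟨hj, hcj⟩)

lemma gK_meas (W : ℝ → Ω → ℝ) (hm : ∀ t, Measurable (W t)) (δ : ℝ) (N : ℕ)
    (cond : ℕ → ℝ → Prop) (hcond : ∀ j, MeasurableSet {x | cond j x}) :
    Measurable (gK W δ N cond) := by
  unfold gK
  refine Measurable.find (f := fun (j : ℕ) (_ : Ω) => j)
    (p := fun j ω => (j ≤ N ∧ cond j (gX W δ j ω)) ∨ j = N)
    (fun n => measurable_const) (fun n => ?_) (fun ω => ⟨N, Or.inr rfl⟩)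
  simp only [Set.setOf_or, Set.setOf_and]
  refine MeasurableSet.union (MeasurableSet.inter (MeasurableSet.const _) ?_)
    (MeasurableSet.const _)
  exact (gX_meas W hm δ n) (hcond n)

lemma gZ_meas (lam : ℝ) (W : ℝ → Ω → ℝ) (hm : ∀ t, Measurable (W t)) (δ : ℝ) (j : ℕ) :
    Measurable (gZ lam W δ j) := by
  apply ENNReal.measurable_ofReal.comp
  apply Real.measurable_exp.comp
  exact ((gX_meas W hm δ j).const_mul (-lam)).sub measurable_const

lemma gZstop_meas (lam : ℝ) (W : ℝ → Ω → ℝ) (hm : ∀ t, Measurable (W t)) (δ : ℝ)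
    (N : ℕ) (cond : ℕ → ℝ → Prop) (hcond : ∀ j, MeasurableSet {x | cond j x})
    (g : Ω → ℕ) (hg : Measurable g) :
    Measurable (fun ω => gZ lam W δ (g ω) ω) := by
  have h : Measurable (fun q : Ω × ℕ => gZ lam W δ q.2 q.1) :=
    measurable_from_prod_countable_left (fun j => gZ_meas lam W hm δ j)
  have e : (fun ω => gZ lam W δ (g ω) ω)
      = (fun q : Ω × ℕ => gZ lam W δ q.2 q.1) ∘ (fun ω => (ω, g ω)) := rfl
  rw [e]
  exact h.comp (measurable_id.prodMk hg)

lemma grid_indep (P : Measure Ω) (W : ℝ → Ω → ℝ) (hW : IsStandardBrownianMotion P W)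
    (δ : ℝ) (hδ : 0 ≤ δ) (N : ℕ) (cond : ℕ → ℝ → Prop)
    (hcond : ∀ j, MeasurableSet {x | cond j x}) (lam : ℝ) (k : ℕ) (hkN : k < N) :
    IndepFun (fun ω => Set.indicator {ω' | k < gK W δ N cond ω'} (gZ lam W δ k) ω)
      (fun ω => ENNReal.ofReal
        (Real.exp (-lam * (gX W δ (k+1) ω - gX W δ k ω) - lam^2*δ/2))) P := by
  classical
  set incr : Fin (k+1) → Ω → ℝ :=
    fun i ω => W ((((i : ℕ)+1 : ℕ) : ℝ) * δ) ω - W (((i : ℕ) : ℝ) * δ) ω with hincr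
  have base : iIndepFun incr P := by
    have hmono : Monotone (fun i : Fin (k+2) => ((i : ℕ) : ℝ) * δ) := by
      intro a b hab
      have : (a : ℕ) ≤ (b : ℕ) := hab
      exact mul_le_mul_of_nonneg_right (by exact_mod_cast this) hδ
    have hnn : ∀ i : Fin (k+2), 0 ≤ ((i : ℕ) : ℝ) * δ :=
      fun i => mul_nonneg (Nat.cast_nonneg _) hδ
    have h := hW.indep_incr (k+1) (fun i => ((i : ℕ) : ℝ) * δ) hmono hnn
    simpa only [Fin.val_succ, Fin.coe_castSucc] using h
  set S : Finset (Fin (k+1)) := Finset.univ.erase (Fin.last k) with hS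
  set T : Finset (Fin (k+1)) := {Fin.last k} with hT
  have hST : Disjoint S T :=
    Finset.disjoint_singleton_right.mpr (Finset.notMem_erase _ _)
  have hm_incr : ∀ i, Measurable (incr i) := fun i => (hW.meas _).sub (hW.meas _)
  have hIF := base.indepFun_finset S T hST hm_incr
  have hik : ∀ (i : ℕ) (hi : i < k), (⟨i, Nat.lt_succ_of_lt hi⟩ : Fin (k+1)) ∈ S := by
    intro i hi
    refine Finset.mem_erase.mpr ⟨?_, Finset.mem_univ _⟩
    simp only [Fin.ne_iff_vne, Fin.val_last]
    omega
  set dv : ({ x // x ∈ S } → ℝ) → ℕ → ℝ := fun v i =>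
    if h : i < k then v ⟨⟨i, Nat.lt_succ_of_lt h⟩, hik i h⟩ else 0 with hdvdef
  set Yv : ({ x // x ∈ S } → ℝ) → ℕ → ℝ :=
    fun v j => ∑ i ∈ Finset.range j, dv v i with hYvdef
  set φ : ({ x // x ∈ S } → ℝ) → ℝ≥0∞ := fun v =>
    Set.indicator {v' | ∀ j ≤ k, ¬ cond j (Yv v' j)}
      (fun v' => ENNReal.ofReal (Real.exp (-lam * Yv v' k - lam^2 * ((k : ℝ)*δ)/2))) v
    with hφdef
  set ψ : ({ x // x ∈ T } → ℝ) → ℝ≥0∞ := fun v =>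
    ENNReal.ofReal (Real.exp (-lam * v ⟨Fin.last k, Finset.mem_singleton_self _⟩
      - lam^2*δ/2)) with hψdef
  have hdv : ∀ i, Measurable (fun v => dv v i) := by
    intro i
    rcases Nat.lt_or_ge i k with h | h
    · simpa only [hdvdef, dif_pos h] using measurable_pi_apply _
    · simp only [hdvdef, dif_neg (Nat.not_lt.mpr h)]
      exact measurable_const
  have hYv : ∀ j, Measurable (fun v => Yv v j) :=
    fun j => Finset.measurable_sum _ (fun i _ => hdv i)
  have hφ : Measurable φ := by
    refine Measurable.indicator ?_ ?_
    · exact (((measurable_const.mul (hYv k)).sub measurable_const).exp).ennreal_ofReal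
    · have : {v' : { x // x ∈ S } → ℝ | ∀ j ≤ k, ¬ cond j (Yv v' j)}
          = ⋂ j, ⋂ (_ : j ≤ k), ((fun v => Yv v j) ⁻¹' {x | cond j x})ᶜ := by
        ext v; simp
      rw [this]
      exact MeasurableSet.iInter fun j => MeasurableSet.iInter fun hj =>
        ((hYv j) (hcond j)).compl
  have hψ : Measurable ψ := by
    exact (((measurable_const.mul (measurable_pi_apply _)).sub
      measurable_const).exp).ennreal_ofReal
  have hcomp := hIF.comp hφ hψ
  have E2 : (fun ω => ENNReal.ofReal
      (Real.exp (-lam * (gX W δ (k+1) ω - gX W δ k ω) - lam^2*δ/2)))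
      = ψ ∘ (fun a (i : { x // x ∈ T }) => incr (↑i) a) := by
    funext ω
    have hsub : gX W δ (k+1) ω - gX W δ k ω = incr (Fin.last k) ω := by
      simp only [gX, hincr, Fin.val_last]
      push_cast
      ring
    simp only [Function.comp_apply, hψdef, hsub]
  have E1 : (fun ω => Set.indicator {ω' | k < gK W δ N cond ω'} (gZ lam W δ k) ω)
      = φ ∘ (fun a (i : { x // x ∈ S }) => incr (↑i) a) := by
    funext ω
    set v : { x // x ∈ S } → ℝ := fun i => incr (↑i) ω with hv
    have Y0 : Yv v 0 = 0 := Finset.sum_range_zero _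
    have Ysucc : ∀ j, Yv v (j+1) = Yv v j + dv v j := fun j => Finset.sum_range_succ _ j
    have C1 : ∀ j, j ≤ k → Yv v j = gX W δ j ω := by
      intro j
      induction j with
      | zero =>
        intro _
        rw [Y0]
        simp [gX]
      | succ j ih =>
        intro hj
        have hjk : j < k := hj
        have hjle : j ≤ k := le_of_lt hjk
        rw [Ysucc j, ih hjle]
        have hdvj : dv v j = incr ⟨j, Nat.lt_succ_of_lt hjk⟩ ω := by
          simp only [hdvdef, dif_pos hjk, hv]
        rw [hdvj]
        simp only [hincr, gX]
        push_cast
        ring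
    have C2 : (k < gK W δ N cond ω) ↔ (∀ j ≤ k, ¬ cond j (Yv v j)) := by
      rw [gK_lt_iff W δ N cond ω k hkN]
      constructor
      · intro h j hj
        rw [C1 j hj]; exact h j hj
      · intro h j hj
        have := h j hj
        rwa [C1 j hj] at this
    by_cases h : ω ∈ {ω' | k < gK W δ N cond ω'}
    · rw [Set.indicator_of_mem h]
      have hmem : v ∈ {v' | ∀ j ≤ k, ¬ cond j (Yv v' j)} := C2.mp h
      simp only [Function.comp_apply, hφdef]
      rw [Set.indicator_of_mem hmem]
      rw [gZ, C1 k le_rfl]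
    · rw [Set.indicator_of_notMem h]
      have hmem : v ∉ {v' | ∀ j ≤ k, ¬ cond j (Yv v' j)} := fun hc => h (C2.mpr hc)
      simp only [Function.comp_apply, hφdef]
      rw [Set.indicator_of_notMem hmem]
  rw [E1, E2]
  exact hcomp
lemma grid_identity (P : Measure Ω) [IsProbabilityMeasure P] (W : ℝ → Ω → ℝ)
    (hW : IsStandardBrownianMotion P W) (lam δ : ℝ) (hδ : 0 < δ) (N : ℕ)
    (cond : ℕ → ℝ → Prop) (hcond : ∀ j, MeasurableSet {x | cond j x}) :
    ∫⁻ ω, gZ lam W δ (gK W δ N cond ω) ω ∂P = 1 := by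
  suffices h : ∀ k, k ≤ N → ∫⁻ ω, gZ lam W δ (min (gK W δ N cond ω) k) ω ∂P = 1 by
    have h2 := h N le_rfl
    rw [← h2]
    refine lintegral_congr fun ω => ?_
    rw [min_eq_left (gK_le W δ N cond ω)]
  intro k
  induction k with
  | zero =>
    intro _
    have hz : ∀ ω : Ω, gZ lam W δ (min (gK W δ N cond ω) 0) ω = 1 := by
      intro ω
      rw [min_eq_right (Nat.zero_le _)]
      simp [gZ, gX]
    simp only [hz]
    simp
  | succ k ih =>
    intro hk1
    have hkN : k < N := hk1
    have ihk := ih (le_of_lt hkN)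
    set A := {ω | k < gK W δ N cond ω} with hA
    have hAmeas : MeasurableSet A :=
      (gK_meas W hW.meas δ N cond hcond) measurableSet_Ioi
    -- the exponential increment factor integrates to 1
    have he1 : ∫⁻ ω, ENNReal.ofReal
        (Real.exp (-lam * (gX W δ (k+1) ω - gX W δ k ω) - lam^2*δ/2)) ∂P = 1 := by
      have hDmeas : Measurable (fun ω => gX W δ (k+1) ω - gX W δ k ω) :=
        (gX_meas W hW.meas δ (k+1)).sub (gX_meas W hW.meas δ k)
      have hD : (fun ω => gX W δ (k+1) ω - gX W δ k ω)
          = fun ω => W (((k:ℝ)+1)*δ) ω - W ((k:ℝ)*δ) ω := by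
        funext ω; simp only [gX]; push_cast; ring
      have hmap : P.map (fun ω => gX W δ (k+1) ω - gX W δ k ω)
          = gaussianReal 0 (Real.toNNReal δ) := by
        rw [hD]
        have := hW.gauss_incr ((k:ℝ)*δ) (((k:ℝ)+1)*δ)
          (by positivity) (by nlinarith [Nat.cast_nonneg (α := ℝ) k])
        rw [this]
        congr 1
        ring_nf
      have hsplit : ∀ ω : Ω, ENNReal.ofReal
          (Real.exp (-lam * (gX W δ (k+1) ω - gX W δ k ω) - lam^2*δ/2))
          = ENNReal.ofReal (Real.exp (-(lam^2*δ/2)))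
            * ENNReal.ofReal (Real.exp (-lam * (gX W δ (k+1) ω - gX W δ k ω))) := by
        intro ω
        rw [← ENNReal.ofReal_mul (Real.exp_nonneg _), ← Real.exp_add]
        congr 1
        ring
      calc ∫⁻ ω, ENNReal.ofReal
            (Real.exp (-lam * (gX W δ (k+1) ω - gX W δ k ω) - lam^2*δ/2)) ∂P
          = ∫⁻ ω, ENNReal.ofReal (Real.exp (-(lam^2*δ/2)))
              * ENNReal.ofReal (Real.exp (-lam * (gX W δ (k+1) ω - gX W δ k ω))) ∂P :=
            lintegral_congr hsplit
        _ = ENNReal.ofReal (Real.exp (-(lam^2*δ/2)))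
              * ∫⁻ ω, ENNReal.ofReal (Real.exp (-lam * (gX W δ (k+1) ω - gX W δ k ω))) ∂P :=
            lintegral_const_mul _ ((measurable_const.mul hDmeas).exp.ennreal_ofReal)
        _ = ENNReal.ofReal (Real.exp (-(lam^2*δ/2)))
              * ∫⁻ x, ENNReal.ofReal (Real.exp (-lam * x)) ∂(gaussianReal 0 (Real.toNNReal δ)) := by
            have hswap : ∫⁻ ω, ENNReal.ofReal (Real.exp (-lam * (gX W δ (k+1) ω - gX W δ k ω))) ∂P
                = ∫⁻ x, ENNReal.ofReal (Real.exp (-lam * x))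
                    ∂(P.map (fun ω => gX W δ (k+1) ω - gX W δ k ω)) :=
              (lintegral_map (f := fun x : ℝ => ENNReal.ofReal (Real.exp (-lam * x)))
                (by fun_prop) hDmeas).symm
            rw [hswap, hmap]
        _ = ENNReal.ofReal (Real.exp (-(lam^2*δ/2)))
              * ENNReal.ofReal (Real.exp ((-lam)^2 * (Real.toNNReal δ : ℝ) / 2)) := by
            rw [lintegral_exp_gauss]
        _ = 1 := by
            rw [Real.coe_toNNReal δ hδ.le, ← ENNReal.ofReal_mul (Real.exp_nonneg _),
              ← Real.exp_add]
            norm_num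
    -- the key product step on `A`
    have key : ∫⁻ ω, Set.indicator A (gZ lam W δ (k+1)) ω ∂P
        = ∫⁻ ω, Set.indicator A (gZ lam W δ k) ω ∂P := by
      have hptw : ∀ ω, Set.indicator A (gZ lam W δ (k+1)) ω
          = Set.indicator A (gZ lam W δ k) ω *
            ENNReal.ofReal (Real.exp (-lam * (gX W δ (k+1) ω - gX W δ k ω) - lam^2*δ/2)) := by
        intro ω
        by_cases h : ω ∈ A
        · rw [Set.indicator_of_mem h, Set.indicator_of_mem h, gZ, gZ,
            ← ENNReal.ofReal_mul (Real.exp_nonneg _), ← Real.exp_add]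
          congr 2
          push_cast
          ring
        · rw [Set.indicator_of_notMem h, Set.indicator_of_notMem h, zero_mul]
      have hindA : Measurable (fun ω => Set.indicator A (gZ lam W δ k) ω) :=
        (gZ_meas lam W hW.meas δ k).indicator hAmeas
      have hDmeas : Measurable (fun ω => ENNReal.ofReal
          (Real.exp (-lam * (gX W δ (k+1) ω - gX W δ k ω) - lam^2*δ/2))) := by
        exact ((measurable_const.mul ((gX_meas W hW.meas δ (k+1)).sub
          (gX_meas W hW.meas δ k))).sub measurable_const).exp.ennreal_ofReal
      calc ∫⁻ ω, Set.indicator A (gZ lam W δ (k+1)) ω ∂P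
          = ∫⁻ ω, Set.indicator A (gZ lam W δ k) ω *
              ENNReal.ofReal (Real.exp (-lam * (gX W δ (k+1) ω - gX W δ k ω) - lam^2*δ/2)) ∂P :=
            lintegral_congr hptw
        _ = (∫⁻ ω, Set.indicator A (gZ lam W δ k) ω ∂P) *
              ∫⁻ ω, ENNReal.ofReal
                (Real.exp (-lam * (gX W δ (k+1) ω - gX W δ k ω) - lam^2*δ/2)) ∂P :=
            lintegral_mul_eq_lintegral_mul_lintegral_of_indepFun'' hindA.aemeasurable
              hDmeas.aemeasurable
              (grid_indep P W hW δ hδ.le N cond hcond lam k hkN)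
        _ = ∫⁻ ω, Set.indicator A (gZ lam W δ k) ω ∂P := by rw [he1, mul_one]
    -- assemble
    have hstep : ∫⁻ ω, gZ lam W δ (min (gK W δ N cond ω) (k+1)) ω ∂P
        = ∫⁻ ω, gZ lam W δ (min (gK W δ N cond ω) k) ω ∂P := by
      rw [← lintegral_add_compl (fun ω => gZ lam W δ (min (gK W δ N cond ω) (k+1)) ω) hAmeas,
        ← lintegral_add_compl (fun ω => gZ lam W δ (min (gK W δ N cond ω) k) ω) hAmeas]
      congr 1
      · -- on A
        have e1 : ∫⁻ ω in A, gZ lam W δ (min (gK W δ N cond ω) (k+1)) ω ∂P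
            = ∫⁻ ω in A, gZ lam W δ (k+1) ω ∂P := by
          refine setLIntegral_congr_fun hAmeas (fun ω hω => ?_)
          rw [min_eq_right]
          exact hω
        have e2 : ∫⁻ ω in A, gZ lam W δ (min (gK W δ N cond ω) k) ω ∂P
            = ∫⁻ ω in A, gZ lam W δ k ω ∂P := by
          refine setLIntegral_congr_fun hAmeas (fun ω hω => ?_)
          rw [min_eq_right]
          exact le_of_lt hω
        rw [e1, e2, ← lintegral_indicator hAmeas, ← lintegral_indicator hAmeas, key]
      · -- on Aᶜ : gK ≤ k, so both mins equal gK
        refine setLIntegral_congr_fun hAmeas.compl (fun ω hω => ?_)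
        have hle : gK W δ N cond ω ≤ k := Nat.not_lt.mp hω
        rw [min_eq_left hle, min_eq_left (le_trans hle (Nat.le_succ k))]
    rw [hstep, ihk]

/-- first time (detected through rationals) where `σ·(W t - W 0) - B t < -θ`. -/
def hitT (σ θ : ℝ) (B : ℝ → ℝ) (W : ℝ → Ω → ℝ) (ω : Ω) : ℝ≥0∞ :=
  ⨅ s : ℚ, if 0 ≤ (s:ℝ) ∧ σ * (W (s:ℝ) ω - W 0 ω) - B (s:ℝ) < -θ
    then ENNReal.ofReal (s:ℝ) else ⊤

lemma hitT_meas (σ θ : ℝ) (B : ℝ → ℝ) (W : ℝ → Ω → ℝ) (hm : ∀ t, Measurable (W t)) :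
    Measurable (hitT σ θ B W) := by
  refine Measurable.iInf fun s => ?_
  refine Measurable.ite ?_ measurable_const measurable_const
  simp only [Set.setOf_and]
  refine MeasurableSet.inter (MeasurableSet.const _) ?_
  exact measurableSet_lt (((( hm _).sub (hm 0)).const_mul σ).sub measurable_const)
    measurable_const

lemma hitT_le {σ θ : ℝ} {B : ℝ → ℝ} {W : ℝ → Ω → ℝ} {ω : Ω}
    (hg : Continuous (fun t => σ * (W t ω - W 0 ω) - B t)) (t : ℝ) (ht : 0 ≤ t)
    (hgt : σ * (W t ω - W 0 ω) - B t < -θ) :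
    hitT σ θ B W ω ≤ ENNReal.ofReal t := by
  refine ENNReal.le_of_forall_pos_le_add fun ε hε _ => ?_
  set g : ℝ → ℝ := fun t => σ * (W t ω - W 0 ω) - B t with hgdef
  have hopen : IsOpen {u : ℝ | g u < -θ} := isOpen_Iio.preimage hg
  obtain ⟨η, hη, hball⟩ := Metric.isOpen_iff.mp hopen t hgt
  have hlt : t < t + min η (ε : ℝ) := by
    have : (0:ℝ) < min η ε := lt_min hη (by exact_mod_cast hε)
    linarith
  obtain ⟨s, hs1, hs2⟩ := exists_rat_btwn hlt
  have hs0 : 0 ≤ (s:ℝ) := le_trans ht (le_of_lt hs1)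
  have hsmem : g (s:ℝ) < -θ := by
    apply hball
    simp only [Metric.mem_ball, Real.dist_eq, abs_lt]
    constructor
    · nlinarith [min_le_left η (ε:ℝ)]
    · calc (s:ℝ) - t < min η (ε:ℝ) := by linarith
        _ ≤ η := min_le_left _ _
  calc hitT σ θ B W ω ≤ if 0 ≤ (s:ℝ) ∧ σ * (W (s:ℝ) ω - W 0 ω) - B (s:ℝ) < -θ
        then ENNReal.ofReal (s:ℝ) else ⊤ := iInf_le _ s
    _ = ENNReal.ofReal (s:ℝ) := if_pos ⟨hs0, hsmem⟩
    _ ≤ ENNReal.ofReal (t + (ε:ℝ)) := by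
        apply ENNReal.ofReal_le_ofReal
        have := min_le_right η (ε:ℝ)
        linarith
    _ = ENNReal.ofReal t + ENNReal.ofReal (ε:ℝ) := ENNReal.ofReal_add ht ε.2
    _ = ENNReal.ofReal t + (ε : ℝ≥0∞) := by rw [ENNReal.ofReal_coe_nnreal]

lemma hitT_approx {σ θ : ℝ} {B : ℝ → ℝ} {W : ℝ → Ω → ℝ} {ω : Ω}
    (hne : hitT σ θ B W ω ≠ ⊤) {ε : ℝ} (hε : 0 < ε) :
    ∃ s : ℚ, 0 ≤ (s:ℝ) ∧ σ * (W (s:ℝ) ω - W 0 ω) - B (s:ℝ) < -θ ∧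
      (hitT σ θ B W ω).toReal ≤ (s:ℝ) ∧ (s:ℝ) < (hitT σ θ B W ω).toReal + ε := by
  set R := (hitT σ θ B W ω).toReal with hRdef
  have hRnn : 0 ≤ R := ENNReal.toReal_nonneg
  have hofR : ENNReal.ofReal R = hitT σ θ B W ω := ENNReal.ofReal_toReal hne
  have hlt : hitT σ θ B W ω < hitT σ θ B W ω + ENNReal.ofReal ε :=
    ENNReal.lt_add_right hne (ENNReal.ofReal_pos.mpr hε).ne'
  rw [hitT] at hlt
  obtain ⟨s, hs⟩ := iInf_lt_iff.mp (lt_of_le_of_lt (le_refl _) hlt)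
  by_cases hcond : 0 ≤ (s:ℝ) ∧ σ * (W (s:ℝ) ω - W 0 ω) - B (s:ℝ) < -θ
  · rw [if_pos hcond] at hs
    refine ⟨s, hcond.1, hcond.2, ?_, ?_⟩
    · have h1 : hitT σ θ B W ω ≤ ENNReal.ofReal (s:ℝ) := by
        have h1' := iInf_le (fun s' : ℚ => if 0 ≤ (s':ℝ) ∧
          σ * (W (s':ℝ) ω - W 0 ω) - B (s':ℝ) < -θ
          then ENNReal.ofReal (s':ℝ) else ⊤) s
        rw [if_pos hcond] at h1'
        exact h1'
      rw [← hofR] at h1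
      exact (ENNReal.ofReal_le_ofReal_iff hcond.1).mp h1
    · have h2 : ENNReal.ofReal (s:ℝ) < ENNReal.ofReal (R + ε) := by
        calc ENNReal.ofReal (s:ℝ) < hitT σ θ B W ω + ENNReal.ofReal ε := hs
          _ = ENNReal.ofReal R + ENNReal.ofReal ε := by rw [hofR]
          _ = ENNReal.ofReal (R + ε) := (ENNReal.ofReal_add hRnn hε.le).symm
      exact (ENNReal.ofReal_lt_ofReal_iff (by linarith)).mp h2
  · rw [if_neg hcond] at hs
    exact absurd hs not_top_lt

lemma exp_bound_aux {σ lam θ' brho bR x r s : ℝ} (hσ : 0 < σ) (hlam : 0 < lam)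
    (hd2 : σ * x - brho ≤ -θ') (hBle : brho ≤ bR) (hd1 : r ≤ s) :
    -(lam/σ) * (bR - θ') - lam^2 * s / 2 ≤ -lam * x - lam^2 * r / 2 := by
  have hσX : σ * x ≤ bR - θ' := by linarith
  have h5 : lam * x ≤ (lam/σ) * (bR - θ') := by
    rw [div_mul_eq_mul_div, le_div_iff₀ hσ]
    nlinarith
  nlinarith [sq_nonneg lam, mul_le_mul_of_nonneg_left hd1 (sq_nonneg lam)]

set_option maxHeartbeats 2000000 in
lemma key (P : Measure Ω) [IsProbabilityMeasure P] (W : ℝ → Ω → ℝ)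
    (hW : IsStandardBrownianMotion P W) (σ : ℝ) (hσ : 0 < σ)
    (B : ℝ → ℝ) (hBc : Continuous B) (hBnn : ∀ x, 0 ≤ B x)
    (hBsm : StrictMonoOn B (Ici 0)) (hBcc : ConcaveOn ℝ (Ici 0) B)
    (θ v b : ℝ) (h0v : 0 < v) (hvθ : v < θ) (hb : 0 ≤ b) (hbv : B b ≤ v) :
    ENNReal.ofReal b ≤ ∫⁻ ω, hitT σ θ B W ω ∂P := by
  by_cases hI : ∫⁻ ω, hitT σ θ B W ω ∂P = ⊤
  · rw [hI]; exact le_top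
  have hm : Measurable (hitT σ θ B W) := hitT_meas σ θ B W hW.meas
  set I := ∫⁻ ω, hitT σ θ B W ω ∂P with hIdef
  have hfin : ∀ᵐ ω ∂P, hitT σ θ B W ω ≠ ⊤ :=
    (ae_lt_top hm hI).mono fun ω h => h.ne
  set R : Ω → ℝ := fun ω => (hitT σ θ B W ω).toReal with hRdef
  have hRmeas : Measurable R := hm.ennreal_toReal
  have hRnn : ∀ ω, 0 ≤ R ω := fun ω => ENNReal.toReal_nonneg
  set m := I.toReal with hmdef
  have hm0 : 0 ≤ m := ENNReal.toReal_nonneg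
  have hRint : Integrable R P := by
    refine ⟨hRmeas.aestronglyMeasurable, ?_⟩
    rw [hasFiniteIntegral_iff_ofReal (ae_of_all _ hRnn)]
    have : ∀ᵐ ω ∂P, ENNReal.ofReal (R ω) = hitT σ θ B W ω :=
      hfin.mono fun ω h => ENNReal.ofReal_toReal h
    rw [lintegral_congr_ae this]
    exact Ne.lt_top hI
  have hRval : ∫ ω, R ω ∂P = m := integral_toReal hm.aemeasurable (ae_lt_top hm hI)
  obtain ⟨θ', hvθ', hθ'θ⟩ : ∃ x : ℝ, v < x ∧ x < θ := ⟨(v+θ)/2, by linarith, by linarith⟩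
  have hθ'pos : 0 < θ' := by linarith
  obtain ⟨lam, hlam, hlamm⟩ : ∃ l : ℝ, 0 < l ∧ σ * l * m ≤ θ' - v := by
    refine ⟨(θ' - v)/(σ * (m + 1)), div_pos (by linarith) (by positivity), ?_⟩
    have he : σ * ((θ' - v)/(σ * (m + 1))) * m = (θ' - v) * (m/(m+1)) := by
      field_simp
    rw [he]
    have h1 : m/(m+1) ≤ 1 := by
      rw [div_le_one (by linarith)]
      linarith
    nlinarith
  obtain ⟨T, hT2n, hTbig⟩ : ∃ T : ℕ, 2 ≤ T ∧
      (σ/lam) * Real.exp (lam*θ'/σ) * m ≤ (θ'-v)/2 * ((T:ℝ) - 1) := by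
    set C := (σ/lam) * Real.exp (lam*θ'/σ) * m with hCdef
    have hCnn : 0 ≤ C := by positivity
    obtain ⟨T, hTge⟩ := exists_nat_ge (C * (2/(θ'-v)) + 2)
    have hC'nn : 0 ≤ C * (2/(θ'-v)) :=
      mul_nonneg hCnn (div_nonneg (by norm_num) (by linarith))
    refine ⟨T, by exact_mod_cast (by linarith : (2:ℝ) ≤ (T:ℝ)), ?_⟩
    have h1 : C * (2/(θ'-v)) + 1 ≤ (T:ℝ) - 1 := by linarith
    have h2 : 0 < (θ'-v)/2 := by linarith
    have h3 := mul_le_mul_of_nonneg_left h1 h2.le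
    have hfield2 : (θ'-v)/2 * (C * (2/(θ'-v)) + 1) = C + (θ'-v)/2 := by
      rw [mul_add, mul_one, ← mul_assoc, mul_comm ((θ'-v)/2) C, mul_assoc]
      have : (θ'-v)/2 * (2/(θ'-v)) = 1 := by
        rw [div_mul_div_comm, mul_comm]
        exact div_self (by nlinarith)
      rw [this, mul_one]
    rw [hfield2] at h3
    linarith
  have hT2 : (2:ℝ) ≤ (T:ℝ) := by exact_mod_cast hT2n
  have hT1 : (0:ℝ) < (T:ℝ) - 1 := by linarith
  -- grid data
  set δ : ℕ → ℝ := fun n => (1/2:ℝ)^n with hδdef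
  have hδpos : ∀ n, 0 < δ n := fun n => pow_pos (by norm_num) n
  set Nn : ℕ → ℕ := fun n => T * 2^n with hNndef
  set cnd : ℕ → ℕ → ℝ → Prop := fun n j x => σ * x ≤ B ((j:ℝ) * δ n) - θ' with hcnddef
  have hcndmeas : ∀ n j, MeasurableSet {x : ℝ | cnd n j x} := by
    intro n j
    exact measurableSet_le (measurable_id.const_mul σ) measurable_const
  set κ : ℕ → Ω → ℕ := fun n ω => gK W (δ n) (Nn n) (cnd n) ω with hκdef
  set ρ : ℕ → Ω → ℝ := fun n ω => ((κ n ω : ℕ) : ℝ) * δ n with hρdef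
  have hNδ : ∀ n, ((Nn n : ℕ) : ℝ) * δ n = T := by
    intro n
    rw [hNndef, hδdef]
    push_cast
    rw [mul_assoc, ← mul_pow]
    norm_num
  have hρ0 : ∀ n ω, 0 ≤ ρ n ω := fun n ω =>
    mul_nonneg (Nat.cast_nonneg _) (hδpos n).le
  have hρT : ∀ n ω, ρ n ω ≤ T := by
    intro n ω
    rw [hρdef]
    calc ((κ n ω : ℕ) : ℝ) * δ n ≤ ((Nn n : ℕ) : ℝ) * δ n :=
        mul_le_mul_of_nonneg_right (Nat.cast_le.mpr (gK_le _ _ _ _ _)) (hδpos n).le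
      _ = T := hNδ n
  -- antitonicity of the grid stopping times
  have hanti : ∀ ω, Antitone (fun n => ρ n ω) := by
    intro ω
    refine antitone_nat_of_succ_le fun n => ?_
    rcases gK_spec W (δ n) (Nn n) (cnd n) ω with hsp | hsp
    · have harg : ((2 * κ n ω : ℕ) : ℝ) * δ (n+1) = ((κ n ω : ℕ) : ℝ) * δ n := by
        rw [hδdef]
        push_cast
        rw [pow_succ]
        ring
      have hgXeq : gX W (δ (n+1)) (2 * κ n ω) ω = gX W (δ n) (κ n ω) ω := by
        rw [gX, gX, harg]
      have hcond2 : cnd (n+1) (2 * κ n ω) (gX W (δ (n+1)) (2 * κ n ω) ω) := by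
        show σ * gX W (δ (n+1)) (2 * κ n ω) ω ≤ B (((2 * κ n ω : ℕ) : ℝ) * δ (n+1)) - θ'
        rw [hgXeq, harg]
        exact hsp
      have hNsucc : Nn (n+1) = 2 * Nn n := by
        simp only [hNndef]
        rw [pow_succ]
        ring
      have h2κ : 2 * κ n ω ≤ Nn (n+1) := by
        have hgk : κ n ω ≤ Nn n := gK_le W (δ n) (Nn n) (cnd n) ω
        rw [hNsucc]
        omega
      have hle : κ (n+1) ω ≤ 2 * κ n ω := gK_find_le _ _ _ _ _ _ h2κ hcond2
      calc ρ (n+1) ω = ((κ (n+1) ω : ℕ) : ℝ) * δ (n+1) := rfl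
        _ ≤ ((2 * κ n ω : ℕ) : ℝ) * δ (n+1) :=
            mul_le_mul_of_nonneg_right (Nat.cast_le.mpr hle) (hδpos (n+1)).le
        _ = ρ n ω := harg
    · have : ρ n ω = ((Nn n : ℕ) : ℝ) * δ n := by
        simp only [hρdef, hκdef, hsp]
      rw [this, hNδ n]
      exact hρT (n+1) ω
  set ρinf : Ω → ℝ := fun ω => ⨅ n, ρ n ω with hρinfdef
  have hbdd : ∀ ω, BddBelow (range fun n => ρ n ω) := by
    intro ω
    refine ⟨0, ?_⟩
    rintro x ⟨n, rfl⟩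
    exact hρ0 n ω
  have htends : ∀ ω, Tendsto (fun n => ρ n ω) atTop (𝓝 (ρinf ω)) :=
    fun ω => tendsto_atTop_ciInf (hanti ω) (hbdd ω)
  have hρinf0 : ∀ ω, 0 ≤ ρinf ω := fun ω => le_ciInf fun n => hρ0 n ω
  -- the good event
  set G : Set Ω := hitT σ θ B W ⁻¹' (Iic (ENNReal.ofReal ((T:ℝ)-1))) with hGdef
  have hGmeas : MeasurableSet G := hm measurableSet_Iic
  have hRleT : ∀ ω ∈ G, R ω ≤ (T:ℝ) - 1 := by
    intro ω hω
    have h1 : (hitT σ θ B W ω).toReal ≤ (ENNReal.ofReal ((T:ℝ)-1)).toReal :=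
      ENNReal.toReal_mono ENNReal.ofReal_ne_top hω
    rwa [ENNReal.toReal_ofReal hT1.le] at h1
  have hGfin : ∀ ω ∈ G, hitT σ θ B W ω ≠ ⊤ := by
    intro ω hω
    exact ne_top_of_le_ne_top ENNReal.ofReal_ne_top hω
  -- pathwise detection
  have hdetect : ∀ ω ∈ G, Continuous (fun t => W t ω) →
      ρinf ω ≤ R ω ∧ σ * (W (ρinf ω) ω - W 0 ω) - B (ρinf ω) ≤ -θ' := by
    intro ω hωG hc
    set g : ℝ → ℝ := fun t => σ * (W t ω - W 0 ω) - B t with hgdef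
    have hgc : Continuous g := (continuous_const.mul (hc.sub continuous_const)).sub hBc
    have hRT : R ω ≤ (T:ℝ) - 1 := hRleT ω hωG
    have hne : hitT σ θ B W ω ≠ ⊤ := hGfin ω hωG
    have hpart1 : ρinf ω ≤ R ω := by
      refine le_of_forall_pos_le_add fun ε' hε' => ?_
      set ε := min ε' 1 with hεdef
      have hε : 0 < ε := lt_min hε' one_pos
      have hε1 : ε ≤ 1 := min_le_right _ _
      obtain ⟨s, hs0, hgs, hsR, hsRε⟩ := hitT_approx hne (half_pos hε)
      have hopen : IsOpen {u : ℝ | g u < -θ'} := isOpen_Iio.preimage hgc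
      have hsmem : ((s:ℝ)) ∈ {u : ℝ | g u < -θ'} := by
        show g (s:ℝ) < -θ'
        have : g (s:ℝ) < -θ := hgs
        linarith
      obtain ⟨η, hη, hball⟩ := Metric.isOpen_iff.mp hopen (s:ℝ) hsmem
      obtain ⟨n, hn⟩ := exists_pow_lt_of_lt_one (lt_min hη (half_pos hε))
        (by norm_num : (1/2:ℝ) < 1)
      have hδn : δ n < min η (ε/2) := hn
      set j := ⌈(s:ℝ)/δ n⌉₊ with hjdef
      have hjlb : (s:ℝ) ≤ (j:ℝ) * δ n := by
        have := Nat.le_ceil ((s:ℝ)/δ n)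
        rw [← hjdef] at this
        calc (s:ℝ) = ((s:ℝ)/δ n) * δ n := (div_mul_cancel₀ _ (hδpos n).ne').symm
          _ ≤ (j:ℝ) * δ n := mul_le_mul_of_nonneg_right this (hδpos n).le
      have hjub : (j:ℝ) * δ n < (s:ℝ) + δ n := by
        have h1 : (j:ℝ) < (s:ℝ)/δ n + 1 :=
          Nat.ceil_lt_add_one (div_nonneg hs0 (hδpos n).le)
        have h2 : (j:ℝ) * δ n < ((s:ℝ)/δ n + 1) * δ n :=
          mul_lt_mul_of_pos_right h1 (hδpos n)
        calc (j:ℝ) * δ n < ((s:ℝ)/δ n + 1) * δ n := h2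
          _ = (s:ℝ) + δ n := by rw [add_mul, div_mul_cancel₀ _ (hδpos n).ne', one_mul]
      have hgj : g ((j:ℝ) * δ n) < -θ' := by
        apply hball
        simp only [Metric.mem_ball, Real.dist_eq, abs_lt]
        constructor
        · have := (lt_min_iff.mp hδn).1
          linarith
        · have := (lt_min_iff.mp hδn).1
          linarith
      have hcondj : cnd n j (gX W (δ n) j ω) := by
        show σ * gX W (δ n) j ω ≤ B ((j:ℝ) * δ n) - θ'
        have : σ * (W ((j:ℝ) * δ n) ω - W 0 ω) - B ((j:ℝ) * δ n) < -θ' := hgj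
        rw [gX]
        linarith
      have hjT : (j:ℝ) * δ n < (T:ℝ) := by
        have hδε : δ n < ε/2 := (lt_min_iff.mp hδn).2
        calc (j:ℝ) * δ n < (s:ℝ) + δ n := hjub
          _ < R ω + ε/2 + ε/2 := by linarith
          _ = R ω + ε := by ring
          _ ≤ ((T:ℝ) - 1) + 1 := by linarith
          _ = (T:ℝ) := by ring
      have hjN : j ≤ Nn n := by
        have h1 : (j:ℝ) * δ n < ((Nn n : ℕ):ℝ) * δ n := by rw [hNδ n]; exact hjT
        have h2 : (j:ℝ) < ((Nn n : ℕ):ℝ) := lt_of_mul_lt_mul_right h1 (hδpos n).le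
        exact_mod_cast h2.le
      have hκj : κ n ω ≤ j := gK_find_le _ _ _ _ _ _ hjN hcondj
      have hρn : ρ n ω ≤ (j:ℝ) * δ n :=
        mul_le_mul_of_nonneg_right (Nat.cast_le.mpr hκj) (hδpos n).le
      have hδε : δ n < ε/2 := (lt_min_iff.mp hδn).2
      refine le_of_lt ?_
      calc ρinf ω ≤ ρ n ω := ciInf_le (hbdd ω) n
        _ ≤ (j:ℝ) * δ n := hρn
        _ < (s:ℝ) + δ n := hjub
        _ < R ω + ε/2 + ε/2 := by linarith
        _ = R ω + ε := by ring
        _ ≤ R ω + ε' := by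
            have hh : ε ≤ ε' := by rw [hεdef]; exact min_le_left _ _
            linarith
    refine ⟨hpart1, ?_⟩
    have hρinfT : ρinf ω < (T:ℝ) := lt_of_le_of_lt hpart1 (by linarith)
    have hev : ∀ᶠ n in atTop, ρ n ω < (T:ℝ) :=
      (htends ω).eventually_lt_const hρinfT
    have hevg : ∀ᶠ n in atTop, g (ρ n ω) ≤ -θ' := by
      refine hev.mono fun n hn => ?_
      have hκN : κ n ω ≠ Nn n := by
        intro hcontra
        have h' : ρ n ω = ((Nn n : ℕ):ℝ) * δ n := by simp only [hρdef, hcontra]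
        rw [h', hNδ n] at hn
        exact lt_irrefl _ hn
      rcases gK_spec W (δ n) (Nn n) (cnd n) ω with hsp | hsp
      · have : σ * gX W (δ n) (κ n ω) ω ≤ B (((κ n ω : ℕ):ℝ) * δ n) - θ' := hsp
        rw [gX] at this
        show σ * (W (ρ n ω) ω - W 0 ω) - B (ρ n ω) ≤ -θ'
        rw [hρdef]
        linarith
      · exact absurd hsp hκN
    have hgρtend : Tendsto (fun n => g (ρ n ω)) atTop (𝓝 (g (ρinf ω))) :=
      (hgc.tendsto (ρinf ω)).comp (htends ω)
    exact le_of_tendsto hgρtend hevg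
  -- grid identities
  have hgrid : ∀ n, ∫⁻ ω, gZ lam W (δ n) (κ n ω) ω ∂P = 1 := by
    intro n
    exact grid_identity P W hW lam (δ n) (hδpos n) (Nn n) (cnd n) (hcndmeas n)
  have hZmeas : ∀ n, Measurable (fun ω => gZ lam W (δ n) (κ n ω) ω) := by
    intro n
    exact gZstop_meas lam W hW.meas (δ n) (Nn n) (cnd n) (hcndmeas n) _
      (gK_meas W hW.meas (δ n) (Nn n) (cnd n) (hcndmeas n))
  -- Fatou
  set ξ : Ω → ℝ≥0∞ := fun ω =>
    ENNReal.ofReal (Real.exp (-(lam/σ) * (B (R ω) - θ') - lam^2 * R ω / 2)) with hξdef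
  have hFA : ∫⁻ ω, G.indicator ξ ω ∂P ≤ 1 := by
    have hae : ∀ᵐ ω ∂P, G.indicator ξ ω ≤ liminf (fun n => gZ lam W (δ n) (κ n ω) ω) atTop := by
      filter_upwards [hW.cont] with ω hc
      by_cases hωG : ω ∈ G
      · rw [Set.indicator_of_mem hωG]
        obtain ⟨hd1, hd2⟩ := hdetect ω hωG hc
        set F : ℝ → ℝ≥0∞ := fun t =>
          ENNReal.ofReal (Real.exp (-lam * (W t ω - W 0 ω) - lam^2 * t / 2)) with hFdef
        have hZeq : ∀ n, gZ lam W (δ n) (κ n ω) ω = F (ρ n ω) := by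
          intro n
          rw [gZ, gX, hFdef, hρdef]
        have hFc : Continuous F := by
          apply ENNReal.continuous_ofReal.comp
          apply Real.continuous_exp.comp
          exact (continuous_const.mul (hc.sub continuous_const)).sub
            ((continuous_const.mul continuous_id).div_const 2)
        have hFtend : Tendsto (fun n => F (ρ n ω)) atTop (𝓝 (F (ρinf ω))) :=
          (hFc.tendsto (ρinf ω)).comp (htends ω)
        have hliminf : liminf (fun n => gZ lam W (δ n) (κ n ω) ω) atTop = F (ρinf ω) := by
          simp_rw [hZeq]
          exact hFtend.liminf_eq
        rw [hliminf]
        rw [hFdef, hξdef]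
        apply ENNReal.ofReal_le_ofReal
        apply Real.exp_le_exp.mpr
        have hBle : B (ρinf ω) ≤ B (R ω) := by
          rcases eq_or_lt_of_le hd1 with heq | hlt
          · rw [heq]
          · exact (hBsm (hρinf0 ω) (hRnn ω) hlt).le
        exact exp_bound_aux hσ hlam hd2 hBle hd1
      · rw [Set.indicator_of_notMem hωG]
        exact zero_le
    calc ∫⁻ ω, G.indicator ξ ω ∂P
        ≤ ∫⁻ ω, liminf (fun n => gZ lam W (δ n) (κ n ω) ω) atTop ∂P :=
          lintegral_mono_ae hae
      _ ≤ liminf (fun n => ∫⁻ ω, gZ lam W (δ n) (κ n ω) ω ∂P) atTop :=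
          lintegral_liminf_le hZmeas
      _ = 1 := by simp_rw [hgrid]; exact liminf_const 1
    -- truncated time and exponent
  set J : Ω → ℝ := fun ω => min (R ω) ((T:ℝ)-1) with hJdef
  have hJmeas : Measurable J := hRmeas.min measurable_const
  have hJnn : ∀ ω, 0 ≤ J ω := fun ω => le_min (hRnn ω) (by linarith)
  have hJleR : ∀ ω, J ω ≤ R ω := fun ω => min_le_left _ _
  have hJleT : ∀ ω, J ω ≤ (T:ℝ)-1 := fun ω => min_le_right _ _
  set Y : Ω → ℝ := fun ω => (lam/σ) * (B (J ω) - θ') + lam^2 * J ω / 2 with hYdef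
  have hYmeas : Measurable Y := by
    apply Measurable.add
    · exact measurable_const.mul ((hBc.measurable.comp hJmeas).sub measurable_const)
    · exact (measurable_const.mul hJmeas).div_const 2
  have hJint : Integrable J P := by
    refine Integrable.mono' (integrable_const ((T:ℝ)-1)) hJmeas.aestronglyMeasurable
      (ae_of_all _ fun ω => ?_)
    rw [Real.norm_eq_abs, abs_of_nonneg (hJnn ω)]
    exact hJleT ω
  have hBJle : ∀ ω, B (J ω) ≤ B ((T:ℝ)-1) := by
    intro ω
    rcases eq_or_lt_of_le (hJleT ω) with heq | hlt
    · rw [heq]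
    · exact (hBsm (Set.mem_Ici.mpr (hJnn ω)) (Set.mem_Ici.mpr (by linarith)) hlt).le
  have hBJint : Integrable (fun ω => B (J ω)) P := by
    refine Integrable.mono' (integrable_const (B ((T:ℝ)-1)))
      (hBc.measurable.comp hJmeas).aestronglyMeasurable (ae_of_all _ fun ω => ?_)
    rw [Real.norm_eq_abs, abs_of_nonneg (hBnn _)]
    exact hBJle ω
  have hYint : Integrable Y P := by
    apply Integrable.add
    · exact (hBJint.sub (integrable_const θ')).const_mul _
    · exact (hJint.const_mul _).div_const 2
  have hexpb : ∀ ω, Real.exp (-Y ω) ≤ Real.exp (lam*θ'/σ) := by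
    intro ω
    apply Real.exp_le_exp.mpr
    have h1 : 0 ≤ B (J ω) := hBnn _
    have h2 : 0 ≤ J ω := hJnn ω
    have h3 : 0 < lam/σ := div_pos hlam hσ
    simp only [hYdef]
    have he : (lam/σ) * θ' = lam * θ'/σ := by ring
    nlinarith [mul_nonneg h3.le h1, mul_nonneg (sq_nonneg lam) h2]
  have hexpYint : Integrable (fun ω => Real.exp (-Y ω)) P := by
    refine Integrable.mono' (integrable_const (Real.exp (lam*θ'/σ)))
      (hYmeas.neg.exp).aestronglyMeasurable (ae_of_all _ fun ω => ?_)
    rw [Real.norm_eq_abs, abs_of_nonneg (Real.exp_nonneg _)]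
    exact hexpb ω
  -- full lintegral bound
  have hFULL : ∫⁻ ω, ENNReal.ofReal (Real.exp (-Y ω)) ∂P
      ≤ 1 + ENNReal.ofReal (Real.exp (lam*θ'/σ)) * P Gᶜ := by
    rw [← lintegral_add_compl (fun ω => ENNReal.ofReal (Real.exp (-Y ω))) hGmeas]
    refine add_le_add ?_ ?_
    · have he : ∫⁻ ω in G, ENNReal.ofReal (Real.exp (-Y ω)) ∂P = ∫⁻ ω in G, ξ ω ∂P := by
        refine setLIntegral_congr_fun hGmeas (fun ω hω => ?_)
        have hJR : J ω = R ω := min_eq_left (hRleT ω hω)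
        have harg : -Y ω = -(lam/σ) * (B (R ω) - θ') - lam^2 * R ω / 2 := by
          simp only [hYdef, hJR]
          ring
        rw [harg, hξdef]
      rw [he, ← lintegral_indicator hGmeas]
      exact hFA
    · calc ∫⁻ ω in Gᶜ, ENNReal.ofReal (Real.exp (-Y ω)) ∂P
          ≤ ∫⁻ _ in Gᶜ, ENNReal.ofReal (Real.exp (lam*θ'/σ)) ∂P :=
            setLIntegral_mono measurable_const (fun ω _ => ENNReal.ofReal_le_ofReal (hexpb ω))
        _ = ENNReal.ofReal (Real.exp (lam*θ'/σ)) * P Gᶜ := setLIntegral_const _ _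
  -- Markov
  have hMarkov : P Gᶜ ≤ I / ENNReal.ofReal ((T:ℝ)-1) := by
    have hsub : Gᶜ ⊆ {ω | ENNReal.ofReal ((T:ℝ)-1) ≤ hitT σ θ B W ω} := by
      intro ω hω
      have h1 : ¬ (hitT σ θ B W ω ≤ ENNReal.ofReal ((T:ℝ)-1)) := hω
      exact (lt_of_not_ge h1).le
    calc P Gᶜ ≤ P {ω | ENNReal.ofReal ((T:ℝ)-1) ≤ hitT σ θ B W ω} := measure_mono hsub
      _ ≤ I / ENNReal.ofReal ((T:ℝ)-1) := meas_ge_le_lintegral_div hm.aemeasurable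
          (ne_of_gt (ENNReal.ofReal_pos.mpr hT1)) ENNReal.ofReal_ne_top
  set pr := (P Gᶜ).toReal with hprdef
  have hpr0 : 0 ≤ pr := ENNReal.toReal_nonneg
  have hprle : pr ≤ m / ((T:ℝ)-1) := by
    have hdne : I / ENNReal.ofReal ((T:ℝ)-1) ≠ ⊤ :=
      (ENNReal.div_lt_top hI (ne_of_gt (ENNReal.ofReal_pos.mpr hT1))).ne
    have h1 : (P Gᶜ).toReal ≤ (I / ENNReal.ofReal ((T:ℝ)-1)).toReal :=
      ENNReal.toReal_mono hdne hMarkov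
    rwa [ENNReal.toReal_div, ENNReal.toReal_ofReal hT1.le] at h1
  -- real bound
  have hA1 : ∫ ω, Real.exp (-Y ω) ∂P ≤ 1 + Real.exp (lam*θ'/σ) * pr := by
    have hoA : ENNReal.ofReal (∫ ω, Real.exp (-Y ω) ∂P)
        = ∫⁻ ω, ENNReal.ofReal (Real.exp (-Y ω)) ∂P :=
      ofReal_integral_eq_lintegral_ofReal hexpYint (ae_of_all _ fun ω => Real.exp_nonneg _)
    have hmne : ENNReal.ofReal (Real.exp (lam*θ'/σ)) * P Gᶜ ≠ ⊤ :=
      ENNReal.mul_ne_top ENNReal.ofReal_ne_top (measure_ne_top P _)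
    have hRHSne : (1 + ENNReal.ofReal (Real.exp (lam*θ'/σ)) * P Gᶜ) ≠ ⊤ :=
      ENNReal.add_ne_top.mpr ⟨ENNReal.one_ne_top, hmne⟩
    have h2 := ENNReal.toReal_mono hRHSne (hoA ▸ hFULL)
    rw [ENNReal.toReal_ofReal (integral_nonneg (fun ω => Real.exp_nonneg _))] at h2
    rwa [ENNReal.toReal_add ENNReal.one_ne_top hmne, ENNReal.toReal_one,
      ENNReal.toReal_mul, ENNReal.toReal_ofReal (Real.exp_nonneg _)] at h2
  -- Jensen for exp and the log bound
  have hJen : Real.exp (-∫ ω, Y ω ∂P) ≤ 1 + Real.exp (lam*θ'/σ) * pr :=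
    le_trans (exp_jensen P hYint hexpYint) hA1
  have hRHSpos : (0:ℝ) < 1 + Real.exp (lam*θ'/σ) * pr := by positivity
  have hlog : -∫ ω, Y ω ∂P ≤ Real.exp (lam*θ'/σ) * pr := by
    have h1 : -∫ ω, Y ω ∂P ≤ Real.log (1 + Real.exp (lam*θ'/σ) * pr) :=
      (Real.le_log_iff_exp_le hRHSpos).mpr hJen
    have h2 := Real.log_le_sub_one_of_pos hRHSpos
    linarith
  -- compute ∫ Y
  have i1 : Integrable (fun ω => (lam/σ) * B (J ω)) P := hBJint.const_mul _
  have i2 : Integrable (fun ω => (lam^2/2) * J ω) P := hJint.const_mul _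
  have hYval : ∫ ω, Y ω ∂P
      = (lam/σ) * ((∫ ω, B (J ω) ∂P) - θ') + lam^2 * (∫ ω, J ω ∂P) / 2 := by
    have e : ∫ ω, Y ω ∂P
        = ∫ ω, ((lam/σ) * B (J ω) + (lam^2/2) * J ω + (-(lam/σ*θ'))) ∂P := by
      refine integral_congr_ae (ae_of_all _ fun ω => ?_)
      simp only [hYdef]
      ring
    have i12 : Integrable (fun ω => (lam/σ) * B (J ω) + (lam^2/2) * J ω) P := i1.add i2
    rw [e, integral_add i12 (integrable_const _), integral_add i1 i2, integral_const]
    have p1 : ∫ ω, (lam/σ) * B (J ω) ∂P = (lam/σ) * ∫ ω, B (J ω) ∂P := by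
      simp_rw [← smul_eq_mul]
      exact integral_smul _ _
    have p2 : ∫ ω, (lam^2/2) * J ω ∂P = (lam^2/2) * ∫ ω, J ω ∂P := by
      simp_rw [← smul_eq_mul]
      exact integral_smul _ _
    rw [p1, p2]
    simp [measure_univ]
    ring
  have hJm : ∫ ω, J ω ∂P ≤ m := by
    rw [← hRval]
    exact integral_mono hJint hRint hJleR
  have hJ0 : (0:ℝ) ≤ ∫ ω, J ω ∂P := integral_nonneg hJnn
  -- lower bound the integral of B ∘ J
  have hBJge : v ≤ ∫ ω, B (J ω) ∂P := by
    set IB := ∫ ω, B (J ω) ∂P with hIBdef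
    set IJ := ∫ ω, J ω ∂P with hIJdef
    have key1 : -(Real.exp (lam*θ'/σ) * pr) - lam^2 * IJ / 2 ≤ (lam/σ) * (IB - θ') := by
      rw [hYval] at hlog
      linarith
    have hσl : 0 < σ/lam := div_pos hσ hlam
    have key2 := mul_le_mul_of_nonneg_left key1 hσl.le
    have e1 : (σ/lam) * ((lam/σ) * (IB - θ')) = IB - θ' := by
      field_simp
    have e2 : (σ/lam) * (-(Real.exp (lam*θ'/σ) * pr) - lam^2 * IJ / 2)
        = -((σ/lam) * (Real.exp (lam*θ'/σ) * pr)) - σ * lam * IJ / 2 := by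
      field_simp
    rw [e1, e2] at key2
    have b1 : (σ/lam) * (Real.exp (lam*θ'/σ) * pr) ≤ (θ'-v)/2 := by
      have hx : Real.exp (lam*θ'/σ) * pr ≤ Real.exp (lam*θ'/σ) * (m/((T:ℝ)-1)) :=
        mul_le_mul_of_nonneg_left hprle (Real.exp_nonneg _)
      have h4 : (σ/lam) * (Real.exp (lam*θ'/σ) * pr)
          ≤ (σ/lam) * (Real.exp (lam*θ'/σ) * (m/((T:ℝ)-1))) :=
        mul_le_mul_of_nonneg_left hx hσl.le
      have e3 : (σ/lam) * (Real.exp (lam*θ'/σ) * (m/((T:ℝ)-1)))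
          = ((σ/lam) * Real.exp (lam*θ'/σ) * m)/((T:ℝ)-1) := by
        ring
      have h5 : ((σ/lam) * Real.exp (lam*θ'/σ) * m)/((T:ℝ)-1) ≤ (θ'-v)/2 :=
        (div_le_iff₀ hT1).mpr (by linarith)
      linarith [e3 ▸ h4]
    have b2 : σ * lam * IJ / 2 ≤ (θ'-v)/2 := by
      have h6 : σ * lam * IJ ≤ σ * lam * m :=
        mul_le_mul_of_nonneg_left hJm (mul_pos hσ hlam).le
      linarith
    linarith
  -- Jensen for the concave function B
  have hJensen2 : ∫ ω, B (J ω) ∂P ≤ B (∫ ω, J ω ∂P) :=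
    hBcc.le_map_integral hBc.continuousOn isClosed_Ici
      (ae_of_all _ fun ω => Set.mem_Ici.mpr (hJnn ω)) hJint hBJint
  have hbJ : b ≤ ∫ ω, J ω ∂P := by
    by_contra hcon
    push_neg at hcon
    have h7 : B (∫ ω, J ω ∂P) < B b :=
      hBsm (Set.mem_Ici.mpr hJ0) (Set.mem_Ici.mpr hb) hcon
    linarith
  calc ENNReal.ofReal b ≤ ENNReal.ofReal (∫ ω, J ω ∂P) := ENNReal.ofReal_le_ofReal hbJ
    _ = ∫⁻ ω, ENNReal.ofReal (J ω) ∂P :=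
        ofReal_integral_eq_lintegral_ofReal hJint (ae_of_all _ hJnn)
    _ ≤ ∫⁻ ω, hitT σ θ B W ω ∂P := by
        refine lintegral_mono_ae ?_
        filter_upwards [hfin] with ω hω
        calc ENNReal.ofReal (J ω) ≤ ENNReal.ofReal (R ω) :=
            ENNReal.ofReal_le_ofReal (hJleR ω)
          _ = hitT σ θ B W ω := ENNReal.ofReal_toReal hω

end FPTAux

open FPTAux in
/-- For a barrier `B(t) = K exp[(μ - σ²/2)t + B̃(t)]` with `B̃ : [0,∞) → [0,∞)`
continuous, concave, strictly increasing, `B̃(0) = 0` and `B̃(t) → ∞`, the mean first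
passage time satisfies `E[τ] ≥ B̃⁻¹(q) > 0` where `q = ln(V₀/K)`. -/
theorem fpt_mean_ge_inverse_of_concave_exponent
    {Ω : Type*} [MeasurableSpace Ω] (P : Measure Ω) [IsProbabilityMeasure P]
    (W : ℝ → Ω → ℝ) (hW : IsStandardBrownianMotion P W)
    (μ σ V₀ : ℝ) (hσ : 0 < σ) (hV₀ : 0 < V₀)
    (K : ℝ) (hK0 : 0 < K) (hKV : K < V₀)
    (Bt : ℝ → ℝ) (hBtcont : ContinuousOn Bt (Ici 0)) (hBtconc : ConcaveOn ℝ (Ici 0) Bt)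
    (hBtnonneg : ∀ t ≥ (0 : ℝ), 0 ≤ Bt t)
    (hBtmono : StrictMonoOn Bt (Ici 0)) (hBt0 : Bt 0 = 0)
    (hBttop : Tendsto Bt atTop atTop)
    (Binv : ℝ → ℝ) (hBinvCont : ContinuousOn Binv (Ici 0))
    (hBinvMono : StrictMonoOn Binv (Ici 0))
    (hBinv_left : ∀ t ≥ (0 : ℝ), Binv (Bt t) = t)
    (hBinv_right : ∀ s ≥ (0 : ℝ), 0 ≤ Binv s ∧ Bt (Binv s) = s) :
    ENNReal.ofReal (Binv (Real.log (V₀ / K)))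
      ≤ (∫⁻ ω, fpt (gbm V₀ μ σ W)
          (fun t => K * Real.exp ((μ - σ ^ 2 / 2) * t + Bt t)) ω ∂P) ∧
    0 < Binv (Real.log (V₀ / K)) := by
  set q := Real.log (V₀ / K) with hqdef
  have hq : 0 < q := Real.log_pos ((one_lt_div hK0).mpr hKV)
  have hBinv0 : Binv 0 = 0 := by
    have := hBinv_left 0 le_rfl
    rwa [hBt0] at this
  have hconj2 : 0 < Binv q := by
    have h1 : Binv 0 < Binv q := hBinvMono (Set.mem_Ici.mpr le_rfl)
      (Set.mem_Ici.mpr hq.le) hq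
    rwa [hBinv0] at h1
  refine ⟨?_, hconj2⟩
  -- extended barrier exponent
  set B' : ℝ → ℝ := fun x => Bt (max x 0) with hB'def
  have hB'c : Continuous B' :=
    hBtcont.comp_continuous (continuous_id.max continuous_const)
      (fun x => Set.mem_Ici.mpr (le_max_right _ _))
  have hB'eq : ∀ t, 0 ≤ t → B' t = Bt t := by
    intro t ht
    simp only [hB'def, max_eq_left ht]
  have hB'nn : ∀ x, 0 ≤ B' x := fun x => hBtnonneg _ (le_max_right _ _)
  have hB'sm : StrictMonoOn B' (Ici 0) := by
    intro x hx y hy hxy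
    rw [hB'eq x hx, hB'eq y hy]
    exact hBtmono hx hy hxy
  have hB'cc : ConcaveOn ℝ (Ici 0) B' := by
    refine ⟨convex_Ici 0, fun x hx y hy a b ha hb hab => ?_⟩
    have hcomb : 0 ≤ a • x + b • y :=
      add_nonneg (mul_nonneg ha hx) (mul_nonneg hb hy)
    rw [hB'eq x hx, hB'eq y hy] at *
    rw [hB'eq _ hcomb]
    exact hBtconc.2 hx hy ha hb hab
  -- comparison with the hitting time, for every level θ < q
  have hcompare : ∀ θ : ℝ, θ < q → ∫⁻ ω, hitT σ θ B' W ω ∂P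
      ≤ ∫⁻ ω, fpt (gbm V₀ μ σ W)
          (fun t => K * Real.exp ((μ - σ ^ 2 / 2) * t + Bt t)) ω ∂P := by
    intro θ hθq
    refine lintegral_mono_ae ?_
    filter_upwards [hW.cont, hW.init] with ω hc h0
    refine le_sInf ?_
    rintro x ⟨t, ht0, heq, rfl⟩
    have hgc : Continuous (fun t => σ * (W t ω - W 0 ω) - B' t) :=
      (continuous_const.mul (hc.sub continuous_const)).sub hB'c
    refine hitT_le hgc t ht0 ?_
    -- from the equality of the processes, σ W_t = Bt t - q
    have hlog : Real.log (gbm V₀ μ σ W t ω)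
        = Real.log (K * Real.exp ((μ - σ ^ 2 / 2) * t + Bt t)) := by rw [heq]
    rw [gbm, Real.log_mul hV₀.ne' (Real.exp_ne_zero _), Real.log_exp,
      Real.log_mul hK0.ne' (Real.exp_ne_zero _), Real.log_exp] at hlog
    have hWt : σ * W t ω = Bt t - q := by
      have hsub : q = Real.log V₀ - Real.log K := Real.log_div hV₀.ne' hK0.ne'
      rw [hsub]
      linarith
    rw [h0, sub_zero, hWt, hB'eq t ht0]
    linarith
  -- final: approximate Binv q from below
  refine ENNReal.le_of_forall_pos_le_add fun ε hε hfin => ?_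
  -- find v ∈ (0,q) with Binv q - ε < Binv v
  obtain ⟨v, hv0, hvq, hvB⟩ : ∃ v : ℝ, 0 < v ∧ v < q ∧ Binv q - (ε:ℝ) < Binv v := by
    have hqIci : Ici (0:ℝ) ∈ 𝓝 q := by
      refine mem_of_superset (Metric.ball_mem_nhds q hq) ?_
      intro x hx
      simp only [Metric.mem_ball, Real.dist_eq, abs_lt] at hx
      simp only [Set.mem_Ici]
      linarith [hx.1]
    have hcw : ContinuousWithinAt Binv (Ici 0) q := hBinvCont q (Set.mem_Ici.mpr hq.le)
    have hcq : ContinuousAt Binv q := hcw.continuousAt hqIci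
    have hU : Binv ⁻¹' (Ioi (Binv q - (ε:ℝ))) ∈ 𝓝 q := by
      apply hcq
      exact Ioi_mem_nhds (by
        have : (0:ℝ) < (ε:ℝ) := by exact_mod_cast hε
        linarith)
    obtain ⟨δ₀, hδ₀, hball⟩ := Metric.mem_nhds_iff.mp hU
    refine ⟨q - min (δ₀/2) (q/2), ?_, ?_, ?_⟩
    · have := min_le_right (δ₀/2) (q/2)
      have h2 : 0 < min (δ₀/2) (q/2) := lt_min (by linarith) (by linarith)
      linarith
    · have h2 : 0 < min (δ₀/2) (q/2) := lt_min (by linarith) (by linarith)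
      linarith
    · have hmem : q - min (δ₀/2) (q/2) ∈ Metric.ball q δ₀ := by
        simp only [Metric.mem_ball, Real.dist_eq]
        have h1 := min_le_left (δ₀/2) (q/2)
        have h2 : 0 < min (δ₀/2) (q/2) := lt_min (by linarith) (by linarith)
        rw [abs_lt]
        constructor <;> linarith
      exact hball hmem
  set θ := (v + q)/2 with hθdef
  have hvθ : v < θ := by rw [hθdef]; linarith
  have hθq : θ < q := by rw [hθdef]; linarith
  have hkey := key P W hW σ hσ B' hB'c hB'nn hB'sm hB'cc θ v (Binv v) hv0 hvθ
    (hBinv_right v hv0.le).1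
    (by rw [hB'eq _ (hBinv_right v hv0.le).1]; exact (hBinv_right v hv0.le).2.le)
  calc ENNReal.ofReal (Binv q) ≤ ENNReal.ofReal (Binv v + (ε:ℝ)) :=
        ENNReal.ofReal_le_ofReal (by linarith)
    _ = ENNReal.ofReal (Binv v) + ENNReal.ofReal (ε:ℝ) :=
        ENNReal.ofReal_add (hBinv_right v hv0.le).1 ε.2
    _ = ENNReal.ofReal (Binv v) + (ε : ℝ≥0∞) := by rw [ENNReal.ofReal_coe_nnreal]
    _ ≤ (∫⁻ ω, fpt (gbm V₀ μ σ W)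
          (fun t => K * Real.exp ((μ - σ ^ 2 / 2) * t + Bt t)) ω ∂P) + (ε : ℝ≥0∞) := by
        refine add_le_add ?_ le_rfl
        exact le_trans hkey (hcompare θ hθq)
end
end
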